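/- (Relation between the spectral eta function and the ε-derivative of the shifted zeta function.) Let (ω_k)_{k∈ℕ} be a sequence of nonzero real numbers with δ := inf_k |ω_k| > 0, and let ν ∈ ℂ be such that Σ_k |ω_k|^{−2 Re ν} < ∞. For real ε with |ε| < δ define ζ_s(ν, ε) := Σ_k ((ω_k − ε)²)^{−ν} (a complex power of the positive real (ω_k − ε)²). Then ε ↦ ζ_s(ν, ε) is differentiable at ε = 0 and (∂/∂ε) ζ_s(ν, ε)|_{ε=0} = 2ν · Σ_k ω_k |ω_k|^{−2ν−2}, i.e. the derivative equals 2ν · η_s(ν+1), where η_s(ν) := Σ_k ω_k |ω_k|^{−2ν}. -/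

import Mathlib

open MeasureTheory Complex Filter

/-- For `0 < x`, `((x^2 : ℝ) : ℂ) ^ w = (x : ℂ) ^ (2 * w)`. -/
lemma sq_cpow_aux18 {x : ℝ} (hx : 0 < x) (w : ℂ) :
    (((x ^ 2 : ℝ)) : ℂ) ^ w = ((x : ℝ) : ℂ) ^ (2 * w) := by
  have hx2 : (0:ℝ) < x ^ 2 := by positivity
  have h1 : ((x ^ 2 : ℝ) : ℂ) ≠ 0 := by exact_mod_cast hx2.ne'
  have h2 : ((x : ℝ) : ℂ) ≠ 0 := by exact_mod_cast hx.ne'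
  rw [Complex.cpow_def_of_ne_zero h1, Complex.cpow_def_of_ne_zero h2,
    ← Complex.ofReal_log hx2.le, ← Complex.ofReal_log hx.le, Real.log_pow]
  push_cast
  ring_nf

/-- `b ^ r ≤ 2 ^ |r| * a ^ r` when `a/2 ≤ b ≤ 2a`, `0 < a`. -/
lemma rpow_bound_aux18 {a b : ℝ} (ha : 0 < a) (h1 : a / 2 ≤ b) (h2 : b ≤ 2 * a) (r : ℝ) :
    b ^ r ≤ 2 ^ |r| * a ^ r := by
  have hb : 0 < b := lt_of_lt_of_le (by linarith) h1
  rcases le_or_gt 0 r with hr | hr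
  · rw [_root_.abs_of_nonneg hr]
    calc b ^ r ≤ (2 * a) ^ r := Real.rpow_le_rpow hb.le h2 hr
    _ = 2 ^ r * a ^ r := Real.mul_rpow (by norm_num) ha.le
  · rw [_root_.abs_of_neg hr]
    calc b ^ r ≤ (a / 2) ^ r := Real.rpow_le_rpow_of_nonpos (by linarith) h1 hr.le
    _ = a ^ r / 2 ^ r := Real.div_rpow ha.le (by norm_num : (0:ℝ) ≤ 2) r
    _ = 2 ^ (-r) * a ^ r := by rw [Real.rpow_neg (by norm_num : (0:ℝ) ≤ 2)]; field_simp
    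
/-- Relation between the spectral eta function and the ε-derivative of the
shifted zeta function: with `ζ_s(ν,ε) = ∑_k ((ω_k − ε)²)^{−ν}`, one has
`(∂/∂ε) ζ_s(ν,ε)|_{ε=0} = 2ν ∑_k ω_k |ω_k|^{−2ν−2} = 2ν η_s(ν+1)`. -/
theorem stmt18 (ω : ℕ → ℝ) (hω : ∀ k, ω k ≠ 0) (hδ : 0 < ⨅ k, |ω k|)
    (ν : ℂ) (hν : Summable fun k => |ω k| ^ (-2 * ν.re)) :
    HasDerivAt (fun ε : ℝ => ∑' k, (((ω k - ε) ^ 2 : ℝ) : ℂ) ^ (-ν))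
      (2 * ν * ∑' k, (ω k : ℂ) * ((|ω k| : ℝ) : ℂ) ^ (-2 * ν - 2)) 0 := by
  set δ := ⨅ k, |ω k| with hδdef
  have hbdd : BddBelow (Set.range fun k => |ω k|) :=
    ⟨0, by rintro _ ⟨k, rfl⟩; positivity⟩
  have hδle : ∀ k, δ ≤ |ω k| := fun k => ciInf_le hbdd k
  set t : Set ℝ := Set.Ioo (-(δ/2)) (δ/2) with ht
  have h0t : (0:ℝ) ∈ t := ⟨by linarith, by linarith⟩
  -- bounds on |ω k - ε|
  have key : ∀ k, ∀ ε ∈ t, |ω k| / 2 ≤ |ω k - ε| ∧ |ω k - ε| ≤ 2 * |ω k| := by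
    intro k ε hε
    have hεabs : |ε| < δ / 2 := abs_lt.mpr ⟨hε.1, hε.2⟩
    have h1 : |ε| ≤ |ω k| / 2 := le_trans hεabs.le (by linarith [hδle k])
    constructor
    · linarith [abs_sub_abs_le_abs_sub (ω k) ε]
    · have h2 : |ω k - ε| ≤ |ω k| + |ε| := by
        simpa [Real.norm_eq_abs] using norm_sub_le (ω k) ε
      linarith [abs_nonneg (ω k)]
  set r : ℝ := -2 * ν.re - 1 with hr
  set g' : ℕ → ℝ → ℂ := fun k ε =>
    2 * ν * ((ω k - ε : ℝ) : ℂ) * (((ω k - ε) ^ 2 : ℝ) : ℂ) ^ (-ν - 1) with hg'def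
  set u : ℕ → ℝ := fun k => (2 * ‖ν‖ * 2 ^ |r| / δ) * |ω k| ^ (-2 * ν.re) with hu
  have hupos : Summable u := hν.mul_left _
  -- each term differentiable
  have hg : ∀ k, ∀ ε ∈ t, HasDerivAt
      (fun ε : ℝ => (((ω k - ε) ^ 2 : ℝ) : ℂ) ^ (-ν)) (g' k ε) ε := by
    intro k ε hε
    have hne : ω k - ε ≠ 0 := by
      have := (key k ε hε).1
      have hωk : 0 < |ω k| := lt_of_lt_of_le hδ (hδle k)
      intro h; rw [h] at this; simp at this; linarith
    have hpos : 0 < (ω k - ε) ^ 2 := by positivity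
    have h1 : HasDerivAt (fun ε : ℝ => (ω k - ε) ^ 2)
        ((2:ℕ) * (ω k - ε) ^ 1 * (-1)) ε := by
      exact ((hasDerivAt_id ε).const_sub (ω k)).pow 2
    have h2 := h1.ofReal_comp
    have hcp := (Complex.hasStrictDerivAt_cpow_const (c := -ν)
      (Complex.ofReal_mem_slitPlane.mpr hpos)).hasDerivAt
    have h3 := HasDerivAt.comp (𝕜 := ℝ) (𝕜' := ℂ) ε hcp h2
    have h4 : -ν * (((ω k - ε) ^ 2 : ℝ) : ℂ) ^ (-ν - 1) * (((2:ℕ) * (ω k - ε) ^ 1 * (-1) : ℝ) : ℂ)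
        = g' k ε := by
      rw [hg'def]
      simp only [pow_one, Complex.ofReal_mul, Complex.ofReal_neg, Complex.ofReal_natCast,
        Nat.cast_ofNat]
      push_cast
      ring
    have h5 := h4 ▸ h3
    exact h5
  -- norm bound
  have hbound : ∀ k, ∀ ε ∈ t, ‖g' k ε‖ ≤ u k := by
    intro k ε hε
    obtain ⟨hlo, hhi⟩ := key k ε hε
    have hωk : 0 < |ω k| := lt_of_lt_of_le hδ (hδle k)
    have hx : 0 < |ω k - ε| := lt_of_lt_of_le (by linarith) hlo
    have hne : ω k - ε ≠ 0 := abs_pos.mp hx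
    have hpos : 0 < (ω k - ε) ^ 2 := by positivity
    have hnorm : ‖g' k ε‖ = 2 * ‖ν‖ * |ω k - ε| ^ r := by
      rw [hg'def]
      simp only [norm_mul, Complex.norm_two, Complex.norm_real, Real.norm_eq_abs]
      rw [Complex.norm_cpow_eq_rpow_re_of_pos hpos]
      have heq : ((ω k - ε) ^ 2) ^ (-ν - 1).re = |ω k - ε| ^ (-2 * ν.re - 2) := by
        rw [← _root_.sq_abs, ← Real.rpow_natCast |ω k - ε| 2,
          ← Real.rpow_mul (abs_nonneg _)]
        congr 1
        simp [Complex.sub_re]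
        ring
      rw [heq, hr, show (-2 * ν.re - 1 : ℝ) = 1 + (-2 * ν.re - 2) by ring,
        Real.rpow_add hx, Real.rpow_one]
      ring
    rw [hnorm, hu]
    have h1 : |ω k - ε| ^ r ≤ 2 ^ |r| * |ω k| ^ r := rpow_bound_aux18 hωk hlo hhi r
    have h2 : |ω k| ^ r = |ω k| ^ (-2 * ν.re) * |ω k| ^ (-1 : ℝ) := by
      rw [← Real.rpow_add hωk, hr]; ring_nf
    have h3 : |ω k| ^ (-1 : ℝ) ≤ δ⁻¹ := by
      rw [Real.rpow_neg_one]
      exact inv_anti₀ hδ (hδle k)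
    have h4 : (0:ℝ) ≤ |ω k| ^ (-2 * ν.re) := Real.rpow_nonneg (abs_nonneg _) _
    calc 2 * ‖ν‖ * |ω k - ε| ^ r
        ≤ 2 * ‖ν‖ * (2 ^ |r| * |ω k| ^ r) := by
          apply mul_le_mul_of_nonneg_left h1 (by positivity)
      _ = 2 * ‖ν‖ * 2 ^ |r| * (|ω k| ^ (-2 * ν.re) * |ω k| ^ (-1:ℝ)) := by
          rw [h2]; ring
      _ ≤ 2 * ‖ν‖ * 2 ^ |r| * (|ω k| ^ (-2 * ν.re) * δ⁻¹) := by
          apply mul_le_mul_of_nonneg_left _ (by positivity)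
          exact mul_le_mul_of_nonneg_left h3 h4
      _ = 2 * ‖ν‖ * 2 ^ |r| / δ * |ω k| ^ (-2 * ν.re) := by
          rw [div_eq_mul_inv]; ring
  -- summability at 0
  have hg0 : Summable fun k => (((ω k - 0) ^ 2 : ℝ) : ℂ) ^ (-ν) := by
    apply Summable.of_norm
    have : (fun k => ‖(((ω k - 0) ^ 2 : ℝ) : ℂ) ^ (-ν)‖) =
        fun k => |ω k| ^ (-2 * ν.re) := by
      funext k
      have hωk : 0 < |ω k| := lt_of_lt_of_le hδ (hδle k)
      have hpos : 0 < (ω k - 0) ^ 2 := by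
        have := hω k; rw [sub_zero]; positivity
      rw [Complex.norm_cpow_eq_rpow_re_of_pos hpos, sub_zero,
        ← _root_.sq_abs, ← Real.rpow_natCast |ω k| 2, ← Real.rpow_mul (abs_nonneg _)]
      congr 1
      simp [Complex.neg_re]
    rw [this]
    exact hν
  have main := hasDerivAt_tsum_of_isPreconnected hupos isOpen_Ioo
    (isPreconnected_Ioo) hg hbound h0t hg0 h0t
  refine main.congr_deriv ?_
  symm
  rw [← tsum_mul_left]
  apply tsum_congr
  intro k
  have hωk : 0 < |ω k| := lt_of_lt_of_le hδ (hδle k)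
  rw [hg'def]
  simp only [sub_zero]
  have : (((ω k) ^ 2 : ℝ) : ℂ) ^ (-ν - 1) = ((|ω k| : ℝ) : ℂ) ^ (-2 * ν - 2) := by
    rw [show (ω k)^2 = |ω k|^2 from (_root_.sq_abs (ω k)).symm, sq_cpow_aux18 hωk]
    ring_nf
  rw [this]
  ring
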